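/- Let B = γ I + U Γ Uᵀ with γ > 0, U ∈ R^{d×m}, Γ ∈ R^{m×m} symmetric, and suppose B is positive definite. Let U = QR be a reduced QR factorization. Then there exists L ∈ R^{d×d} with B = L Lᵀ, namely L = √γ I + Q(L_C − √γ I_m)Qᵀ where L_C is the Cholesky factor of C = γ I_m + R Γ Rᵀ. -/

import Mathlib

open Matrix

/-- if `B = γI + UΓUᵀ` is positive definite and `U = QR` is a reduced QR
factorization, then there exists a factor `L_C` with `L_C L_Cᵀ = C = γ I_m + R Γ Rᵀ`
(Cholesky factor) such that `L = √γ I + Q(L_C − √γ I_m)Qᵀ` satisfies `B = L Lᵀ`. -/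
theorem exists_semi_numerical_sqrt
    {d m : ℕ} (γ : ℝ) (hγ : 0 < γ)
    (U : Matrix (Fin d) (Fin m) ℝ) (Γ : Matrix (Fin m) (Fin m) ℝ) (hΓ : Γ.IsSymm)
    (B : Matrix (Fin d) (Fin d) ℝ)
    (hB : B = γ • (1 : Matrix (Fin d) (Fin d) ℝ) + U * Γ * Uᵀ) (hBpd : B.PosDef)
    (Q : Matrix (Fin d) (Fin m) ℝ) (R : Matrix (Fin m) (Fin m) ℝ)
    (hQR : U = Q * R) (hQ : Qᵀ * Q = 1) (hR : R.BlockTriangular id) :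
    ∃ LC : Matrix (Fin m) (Fin m) ℝ,
      LC * LCᵀ = γ • (1 : Matrix (Fin m) (Fin m) ℝ) + R * Γ * Rᵀ ∧
      B = (Real.sqrt γ • (1 : Matrix (Fin d) (Fin d) ℝ)
            + Q * (LC - Real.sqrt γ • (1 : Matrix (Fin m) (Fin m) ℝ)) * Qᵀ)
          * (Real.sqrt γ • (1 : Matrix (Fin d) (Fin d) ℝ)
            + Q * (LC - Real.sqrt γ • (1 : Matrix (Fin m) (Fin m) ℝ)) * Qᵀ)ᵀ := by
  have hQconj : Qᴴ = Qᵀ := by ext i j; simp [conjTranspose_apply]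
  have hCeq : γ • (1 : Matrix (Fin m) (Fin m) ℝ) + R * Γ * Rᵀ = Qᴴ * B * Q := by
    rw [hQconj, hB, hQR]
    rw [Matrix.mul_add, Matrix.add_mul]
    congr 1
    · simp [Matrix.mul_smul, Matrix.smul_mul, hQ]
    · rw [transpose_mul]
      symm
      calc Qᵀ * (Q * R * Γ * (Rᵀ * Qᵀ)) * Q
          = (Qᵀ * Q) * (R * Γ * Rᵀ) * (Qᵀ * Q) := by
            simp only [Matrix.mul_assoc]
        _ = R * Γ * Rᵀ := by rw [hQ]; simp [Matrix.mul_assoc]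
  have hCpsd : (γ • (1 : Matrix (Fin m) (Fin m) ℝ) + R * Γ * Rᵀ).PosSemidef := by
    rw [hCeq]; exact hBpd.posSemidef.conjTranspose_mul_mul_same Q
  set s := Real.sqrt γ with hsdef
  set L : Matrix (Fin m) (Fin m) ℝ :=
    (open scoped MatrixOrder in CFC.sqrt (γ • (1 : Matrix (Fin m) (Fin m) ℝ) + R * Γ * Rᵀ))
    with hLdef
  have hsymm : Lᵀ = L := by
    have h := (open scoped MatrixOrder in (CFC.sqrt_nonneg
      (γ • (1 : Matrix (Fin m) (Fin m) ℝ) + R * Γ * Rᵀ)).posSemidef).isHermitian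
    ext i j
    have := congrFun (congrFun h i) j
    simpa [conjTranspose_apply] using this
  have hLL : L * L = γ • (1 : Matrix (Fin m) (Fin m) ℝ) + R * Γ * Rᵀ :=
    open scoped MatrixOrder in CFC.sqrt_mul_sqrt_self _ hCpsd.nonneg
  have hs : s * s = γ := Real.mul_self_sqrt hγ.le
  refine ⟨L, by rw [hsymm, hLL], ?_⟩
  set M : Matrix (Fin m) (Fin m) ℝ := L - s • 1 with hMdef
  have hMsymm : Mᵀ = M := by
    rw [hMdef, transpose_sub, transpose_smul, transpose_one, hsymm]
  have hT : (s • (1 : Matrix (Fin d) (Fin d) ℝ) + Q * M * Qᵀ)ᵀ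
      = s • 1 + Q * M * Qᵀ := by
    rw [transpose_add, transpose_smul, transpose_one, transpose_mul, transpose_mul,
      transpose_transpose, hMsymm, Matrix.mul_assoc]
  have hQLQ : ∀ X Y : Matrix (Fin m) (Fin m) ℝ,
      Q * X * Qᵀ * (Q * Y * Qᵀ) = Q * (X * Y) * Qᵀ := by
    intro X Y
    calc Q * X * Qᵀ * (Q * Y * Qᵀ) = Q * X * (Qᵀ * Q) * Y * Qᵀ := by
          simp only [Matrix.mul_assoc]
      _ = Q * (X * Y) * Qᵀ := by rw [hQ]; simp only [Matrix.mul_assoc, Matrix.mul_one]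
  have key : M * M + s • M + s • M = R * Γ * Rᵀ := by
    rw [hMdef]
    simp only [Matrix.sub_mul, Matrix.mul_sub, Matrix.smul_mul, Matrix.mul_smul,
      Matrix.mul_one, Matrix.one_mul, smul_smul, hs, hLL, smul_sub]
    module
  have hsm : Q * (s • M) * Qᵀ = s • (Q * M * Qᵀ) := by
    rw [Matrix.mul_smul, Matrix.smul_mul]
  have hms : ∀ X : Matrix (Fin d) (Fin d) ℝ, X * (s • 1) = s • X := by
    intro X; rw [Matrix.mul_smul, Matrix.mul_one]
  have expand : (s • (1 : Matrix (Fin d) (Fin d) ℝ) + Q * M * Qᵀ)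
      * (s • 1 + Q * M * Qᵀ)
      = γ • 1 + Q * (M * M + s • M + s • M) * Qᵀ := by
    simp only [Matrix.mul_add, Matrix.add_mul, hsm, hms, Matrix.smul_mul,
      Matrix.one_mul, smul_smul, hs, hQLQ]
    rw [← hs]
    module
  rw [hT, expand, key, hB, hQR]
  simp only [Matrix.mul_assoc, transpose_mul]
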